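/- If u₁ is rational and z = ((u₁ + i)/(u₁ − i))^(2^(k−1)), then provided z ≠ i, the number u₂ = 2/(z − i) − i is real (its imaginary part is zero). -/

import Mathlib

theorem u2_is_real (u₁ : ℚ) (h0 : u₁ ≠ 0) (k : ℕ) (hk : 1 ≤ k) (z : ℂ)
    (hz : z = (((u₁ : ℂ) + Complex.I) / ((u₁ : ℂ) - Complex.I)) ^ (2 ^ (k - 1)))
    (hzi : z ≠ Complex.I) :
    (2 / (z - Complex.I) - Complex.I).im = 0 := by
  have hu : ((u₁ : ℂ)).im = 0 := by simp
  have hur : ((u₁ : ℂ)).re = (u₁ : ℝ) := by simp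
  have hnum : Complex.normSq ((u₁ : ℂ) + Complex.I) = (u₁ : ℝ)^2 + 1 := by
    simp [Complex.normSq_apply, Complex.add_re, Complex.add_im, hu, hur]
    ring
  have hden : Complex.normSq ((u₁ : ℂ) - Complex.I) = (u₁ : ℝ)^2 + 1 := by
    simp [Complex.normSq_apply, Complex.sub_re, Complex.sub_im, hu, hur]
    ring
  have hdpos : (u₁ : ℝ)^2 + 1 ≠ 0 := by positivity
  have hw : Complex.normSq (((u₁ : ℂ) + Complex.I) / ((u₁ : ℂ) - Complex.I)) = 1 := by
    rw [Complex.normSq_div, hnum, hden, div_self hdpos]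
  have hz1 : Complex.normSq z = 1 := by
    rw [hz, map_pow, hw, one_pow]
  have hab : z.re ^ 2 + z.im ^ 2 = 1 := by
    have := hz1
    simp [Complex.normSq_apply] at this
    nlinarith [this]
  have hsub : z - Complex.I ≠ 0 := sub_ne_zero.mpr hzi
  have hns : Complex.normSq (z - Complex.I) ≠ 0 := by
    exact ne_of_gt (Complex.normSq_pos.mpr hsub)
  have hnsv : Complex.normSq (z - Complex.I) = z.re ^ 2 + (z.im - 1) ^ 2 := by
    simp [Complex.normSq_apply, Complex.sub_re, Complex.sub_im]
    ring
  rw [Complex.sub_im, Complex.div_im]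
  simp only [Complex.I_im, Complex.sub_im, Complex.sub_re, Complex.I_re]
  rw [hnsv] at hns ⊢
  field_simp
  simp only [Complex.re_ofNat, Complex.im_ofNat]
  nlinarith [hab]
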